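/- For all θ₀, θ ∈ ℝ^Λ, with b = exp(‖log f_{θ₀}‖_∞), the Kullback–Leibler distance within the exponential family satisfies the upper bound Δ(f_{θ₀}; f_{θ}) ≤ (b/2)·e^{A‖θ₀−θ‖₂}·‖θ₀ − θ‖₂². -/

import Mathlib

open MeasureTheory

lemma aux_exp_neg_le (s : ℝ) (hs : 0 ≤ s) : Real.exp (-s) ≤ 1 - s + s ^ 2 / 2 := by
  have hder : ∀ t : ℝ, HasDerivAt (fun t => 1 - t + t ^ 2 / 2 - Real.exp (-t))
      (-1 + t + Real.exp (-t)) t := by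
    intro t
    have h1 : HasDerivAt (fun t : ℝ => Real.exp (-t)) (-Real.exp (-t)) t := by
      simpa using (hasDerivAt_neg t).exp
    have h2 := (((hasDerivAt_const t (1:ℝ)).sub (hasDerivAt_id t)).add
      ((hasDerivAt_pow 2 t).div_const 2)).sub h1
    exact h2.congr_deriv (by norm_num)
  have hmono : MonotoneOn (fun t : ℝ => 1 - t + t ^ 2 / 2 - Real.exp (-t)) (Set.Ici 0) := by
    apply monotoneOn_of_deriv_nonneg (convex_Ici 0)
    · exact fun t _ => ((hder t).continuousAt).continuousWithinAt
    · exact fun t _ => ((hder t).differentiableAt).differentiableWithinAt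
    · intro t ht
      rw [(hder t).deriv]
      nlinarith [Real.add_one_le_exp (-t)]
  have := hmono (Set.self_mem_Ici) hs hs
  simp at this
  linarith

lemma aux_exp_le (s : ℝ) (hs : 0 ≤ s) : Real.exp s ≤ 1 + s + s ^ 2 / 2 * Real.exp s := by
  have hder : ∀ t : ℝ, HasDerivAt (fun t => 1 + t + t ^ 2 / 2 * Real.exp t - Real.exp t)
      (1 + (t * Real.exp t + t ^ 2 / 2 * Real.exp t) - Real.exp t) t := by
    intro t
    have h1 : HasDerivAt (fun t : ℝ => t ^ 2 / 2 * Real.exp t)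
        (t * Real.exp t + t ^ 2 / 2 * Real.exp t) t := by
      have := ((hasDerivAt_pow 2 t).div_const 2).mul (Real.hasDerivAt_exp t)
      exact this.congr_deriv (by norm_num)
    have h2 := (((hasDerivAt_const t (1:ℝ)).add (hasDerivAt_id t)).add h1).sub
      (Real.hasDerivAt_exp t)
    exact h2.congr_deriv (by ring)
  have hmono : MonotoneOn (fun t : ℝ => 1 + t + t ^ 2 / 2 * Real.exp t - Real.exp t)
      (Set.Ici 0) := by
    apply monotoneOn_of_deriv_nonneg (convex_Ici 0)
    · exact fun t _ => ((hder t).continuousAt).continuousWithinAt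
    · exact fun t _ => ((hder t).differentiableAt).differentiableWithinAt
    · intro t ht
      rw [(hder t).deriv]
      have hm : Real.exp (-t) * Real.exp t = 1 := by rw [← Real.exp_add]; simp
      have ht' : 0 ≤ t := le_of_lt (by simpa using ht)
      nlinarith [Real.add_one_le_exp (-t), Real.exp_pos t, sq_nonneg t]
  have := hmono (Set.self_mem_Ici) hs hs
  simp at this
  linarith

lemma aux_quad (t : ℝ) : t - 1 + Real.exp (-t) ≤ t ^ 2 / 2 * Real.exp |t| := by
  rcases le_or_gt 0 t with h | h
  · rw [abs_of_nonneg h]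
    have h1 := aux_exp_neg_le t h
    have h2 : (1 : ℝ) ≤ Real.exp t := Real.one_le_exp h
    nlinarith [sq_nonneg t]
  · rw [abs_of_neg h]
    have h1 := aux_exp_le (-t) (by linarith)
    nlinarith

/-- Lemma A.2, third assertion: with `b = exp(‖log f_{θ₀}‖∞)`, the Kullback–Leibler
distance within the exponential family satisfies
`Δ(f_{θ₀}; f_θ) ≤ (b/2)·e^{A‖θ₀−θ‖₂}·‖θ₀ − θ‖₂²`. -/
theorem expFamily_kl_upper_bound
    {E : Type*} [MeasurableSpace E] (μ : Measure E) [IsFiniteMeasure μ]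
    {Λ : Type*} [Fintype Λ] [DecidableEq Λ] (ψ : Λ → E → ℝ)
    (hmeas : ∀ l, Measurable (ψ l))
    (hbdd : ∀ l, ∃ C : ℝ, ∀ x, |ψ l x| ≤ C)
    (horth : ∀ l k, ∫ x, ψ l x * ψ k x ∂μ = if l = k then (1 : ℝ) else 0)
    (A : ℝ) (hApos : 0 < A)
    (hA : ∀ c : Λ → ℝ, ∀ x, |∑ l, c l * ψ l x| ≤
      A * Real.sqrt (∫ y, (∑ l, c l * ψ l y) ^ 2 ∂μ))
    (θ₀ θ : Λ → ℝ) :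
    ∫ x, (Real.exp (∑ l, θ₀ l * ψ l x) *
        Real.log (Real.exp (∑ l, θ₀ l * ψ l x) / Real.exp (∑ l, θ l * ψ l x)) -
        Real.exp (∑ l, θ₀ l * ψ l x) + Real.exp (∑ l, θ l * ψ l x)) ∂μ ≤
      (Real.exp (⨆ x, |∑ l, θ₀ l * ψ l x|) / 2) *
        Real.exp (A * Real.sqrt (∑ l, (θ₀ l - θ l) ^ 2)) * (∑ l, (θ₀ l - θ l) ^ 2) := by
  classical
  choose C hC using hbdd
  set c : Λ → ℝ := fun l => θ₀ l - θ l with hc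
  set g : E → ℝ := fun x => ∑ l, θ₀ l * ψ l x with hg
  set h : E → ℝ := fun x => ∑ l, θ l * ψ l x with hh
  set u : E → ℝ := fun x => ∑ l, c l * ψ l x with hu
  set S : ℝ := ∑ l, (θ₀ l - θ l) ^ 2 with hS
  set r : ℝ := A * Real.sqrt S with hr
  -- measurability
  have hgm : Measurable g := Finset.measurable_sum _ fun l _ => (hmeas l).const_mul _
  have hhm : Measurable h := Finset.measurable_sum _ fun l _ => (hmeas l).const_mul _
  have hum : Measurable u := Finset.measurable_sum _ fun l _ => (hmeas l).const_mul _
  -- bounds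
  have habs : ∀ (d : Λ → ℝ) (x : E), |∑ l, d l * ψ l x| ≤ ∑ l, |d l| * C l := by
    intro d x
    refine (Finset.abs_sum_le_sum_abs _ _).trans (Finset.sum_le_sum fun l _ => ?_)
    rw [abs_mul]
    exact mul_le_mul_of_nonneg_left (hC l x) (abs_nonneg _)
  set Bg : ℝ := ∑ l, |θ₀ l| * C l with hBg
  set Bu : ℝ := ∑ l, |c l| * C l with hBu
  have hgb : ∀ x, |g x| ≤ Bg := fun x => habs θ₀ x
  have hub : ∀ x, |u x| ≤ Bu := fun x => habs c x
  -- u = g - h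
  have hugh : ∀ x, u x = g x - h x := by
    intro x
    simp only [hu, hg, hh, ← Finset.sum_sub_distrib, hc]
    exact Finset.sum_congr rfl fun l _ => by ring
  -- ∫ u² = S
  have hprod_int : ∀ l k, Integrable (fun x => ψ l x * ψ k x) μ := by
    intro l k
    refine Integrable.mono' (integrable_const (C l * C k))
      ((hmeas l).mul (hmeas k)).aestronglyMeasurable (ae_of_all _ fun x => ?_)
    rw [Real.norm_eq_abs, abs_mul]
    exact mul_le_mul (hC l x) (hC k x) (abs_nonneg _) ((abs_nonneg _).trans (hC l x))
  have hu2 : ∫ x, (u x) ^ 2 ∂μ = S := by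
    have hexp : ∀ x, (u x) ^ 2 = ∑ l, ∑ k, (c l * c k) * (ψ l x * ψ k x) := by
      intro x
      rw [sq, hu, Finset.sum_mul_sum]
      exact Finset.sum_congr rfl fun l _ => Finset.sum_congr rfl fun k _ => by ring
    calc ∫ x, (u x) ^ 2 ∂μ
        = ∑ l, ∑ k, ∫ x, (c l * c k) * (ψ l x * ψ k x) ∂μ := by
          simp_rw [hexp]
          rw [integral_finset_sum _ fun l _ =>
            integrable_finset_sum _ fun k _ => (hprod_int l k).const_mul _]
          exact Finset.sum_congr rfl fun l _ =>
            integral_finset_sum _ fun k _ => (hprod_int l k).const_mul _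
      _ = ∑ l, ∑ k, (c l * c k) * (if l = k then (1:ℝ) else 0) := by
          simp_rw [integral_const_mul, horth]
      _ = ∑ l, c l * c l := by
          refine Finset.sum_congr rfl fun l _ => ?_
          rw [Finset.sum_eq_single l (fun k _ hk => by simp [(Ne.symm hk : ¬ l = k)])
            (fun hl => absurd (Finset.mem_univ l) hl)]
          simp
      _ = S := by
          rw [hS]
          exact Finset.sum_congr rfl fun l _ => by rw [hc]; ring
  have hur : ∀ x, |u x| ≤ r := by
    intro x
    have h1 := hA c x
    rw [hr, ← hu2]
    exact h1
  -- sup bound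
  have hbdd_range : BddAbove (Set.range fun x => |g x|) := ⟨Bg, by rintro _ ⟨x, rfl⟩; exact hgb x⟩
  have hgsup : ∀ x, g x ≤ ⨆ x, |g x| :=
    fun x => (le_abs_self _).trans (le_ciSup hbdd_range x)
  set b : ℝ := Real.exp (⨆ x, |g x|) with hb
  -- pointwise rewriting
  have hrw : ∀ x, Real.exp (g x) * Real.log (Real.exp (g x) / Real.exp (h x))
      - Real.exp (g x) + Real.exp (h x)
      = Real.exp (g x) * (u x - 1 + Real.exp (-u x)) := by
    intro x
    rw [← Real.exp_sub, Real.log_exp, ← hugh x]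
    have : h x = g x - u x := by rw [hugh x]; ring
    rw [this, sub_eq_add_neg (g x), Real.exp_add]
    ring
  -- pointwise bound
  have hpt : ∀ x, Real.exp (g x) * (u x - 1 + Real.exp (-u x))
      ≤ (b / 2) * Real.exp r * (u x) ^ 2 := by
    intro x
    have h0 : 0 ≤ u x - 1 + Real.exp (-u x) := by
      have := Real.add_one_le_exp (-u x); linarith
    have h1 : u x - 1 + Real.exp (-u x) ≤ (u x) ^ 2 / 2 * Real.exp |u x| := aux_quad (u x)
    have h2 : (u x) ^ 2 / 2 * Real.exp |u x| ≤ (u x) ^ 2 / 2 * Real.exp r :=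
      mul_le_mul_of_nonneg_left (Real.exp_le_exp.mpr (hur x)) (by positivity)
    have h3 : Real.exp (g x) ≤ b := Real.exp_le_exp.mpr (hgsup x)
    calc Real.exp (g x) * (u x - 1 + Real.exp (-u x))
        ≤ Real.exp (g x) * ((u x) ^ 2 / 2 * Real.exp r) :=
          mul_le_mul_of_nonneg_left (h1.trans h2) (Real.exp_pos _).le
      _ ≤ b * ((u x) ^ 2 / 2 * Real.exp r) :=
          mul_le_mul_of_nonneg_right h3 (by positivity)
      _ = (b / 2) * Real.exp r * (u x) ^ 2 := by ring
  -- integrability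
  have hFm : Measurable fun x => Real.exp (g x) * (u x - 1 + Real.exp (-u x)) :=
    hgm.exp.mul (((hum.sub measurable_const).add hum.neg.exp))
  have hFint : Integrable (fun x => Real.exp (g x) * (u x - 1 + Real.exp (-u x))) μ := by
    refine Integrable.mono' (integrable_const (Real.exp Bg * (Bu + 1 + Real.exp Bu)))
      hFm.aestronglyMeasurable (ae_of_all _ fun x => ?_)
    have e1 : |Real.exp (g x)| ≤ Real.exp Bg := by
      rw [abs_of_pos (Real.exp_pos _)]
      exact Real.exp_le_exp.mpr ((le_abs_self _).trans (hgb x))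
    have e2 : |u x - 1 + Real.exp (-u x)| ≤ Bu + 1 + Real.exp Bu := by
      refine (abs_add_le _ _).trans ?_
      have e3 : |u x - 1| ≤ Bu + 1 := (abs_sub _ _).trans (by
        have := hub x; simp; linarith)
      have e4 : |Real.exp (-u x)| ≤ Real.exp Bu := by
        rw [abs_of_pos (Real.exp_pos _)]
        exact Real.exp_le_exp.mpr ((neg_le_abs _).trans (hub x))
      linarith
    rw [Real.norm_eq_abs, abs_mul]
    exact mul_le_mul e1 e2 (abs_nonneg _) (Real.exp_pos _).le
  have hu2int : Integrable (fun x => (u x) ^ 2) μ := by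
    refine Integrable.mono' (integrable_const (Bu ^ 2))
      (hum.pow_const 2).aestronglyMeasurable (ae_of_all _ fun x => ?_)
    rw [Real.norm_eq_abs, abs_pow]
    exact pow_le_pow_left₀ (abs_nonneg _) (hub x) 2
  -- conclude
  have step : ∫ x, Real.exp (g x) * (u x - 1 + Real.exp (-u x)) ∂μ
      ≤ (b / 2) * Real.exp r * S := by
    calc ∫ x, Real.exp (g x) * (u x - 1 + Real.exp (-u x)) ∂μ
        ≤ ∫ x, (b / 2) * Real.exp r * (u x) ^ 2 ∂μ :=
          integral_mono hFint (hu2int.const_mul _) hpt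
      _ = (b / 2) * Real.exp r * ∫ x, (u x) ^ 2 ∂μ := integral_const_mul _ _
      _ = (b / 2) * Real.exp r * S := by rw [hu2]
  calc ∫ x, (Real.exp (g x) * Real.log (Real.exp (g x) / Real.exp (h x))
        - Real.exp (g x) + Real.exp (h x)) ∂μ
      = ∫ x, Real.exp (g x) * (u x - 1 + Real.exp (-u x)) ∂μ := by
        exact integral_congr_ae (ae_of_all _ hrw)
    _ ≤ (b / 2) * Real.exp r * S := step
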